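/- For every m ≥ 4, the Lie algebra 𝔤⁴_{(m,m−1)} has rank 2: there exists a 2-dimensional abelian Lie subalgebra of Der(𝔤⁴_{(m,m−1)}) all of whose elements are semisimple (diagonalizable) linear endomorphisms, and every such abelian subalgebra of semisimple derivations has dimension at most 2. -/

import Mathlib

open Module

/-- The `i`-th basis vector (1-indexed); `0` when out of range. -/
noncomputable def basisVec {L : Type} [AddCommGroup L] [Module ℂ L] {n : ℕ}
    (b : Basis (Fin n) ℂ L) (i : ℕ) : L :=
  if h : 1 ≤ i ∧ i ≤ n then b ⟨i - 1, by omega⟩ else 0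

/-- `b` realizes the structure constants of `𝔤⁴_{(m,m-1)}`. -/
def IsG4Basis {L : Type} [LieRing L] [LieAlgebra ℂ L] (m : ℕ)
    (b : Basis (Fin (2 * m + 1)) ℂ L) : Prop :=
  ∀ a c : ℕ, a < c →
    ⁅basisVec b a, basisVec b c⁆ =
      (if a = 1 ∧ 2 ≤ c ∧ c ≤ 2 * m - 1 then basisVec b (c + 1) else 0) +
      (if 2 ≤ a ∧ a ≤ m ∧ a + c = 2 * m + 1 then
        ((-1 : ℂ)) ^ a • basisVec b (2 * m + 1) else 0)

namespace G4Aux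

open Polynomial

variable {L : Type} [LieRing L] [LieAlgebra ℂ L] {m : ℕ}
  (b : Basis (Fin (2 * m + 1)) ℂ L)

lemma basisVec_in (j : ℕ) (h1 : 1 ≤ j) (h2 : j ≤ 2 * m + 1) :
    basisVec b j = b ⟨j - 1, by omega⟩ := dif_pos ⟨h1, h2⟩

lemma basisVec_out (j : ℕ) (h : ¬(1 ≤ j ∧ j ≤ 2 * m + 1)) :
    basisVec b j = 0 := dif_neg h

lemma basisVec_fin (i : Fin (2 * m + 1)) : basisVec b ((i : ℕ) + 1) = b i := by
  rw [basisVec_in b _ (by omega) (by omega)]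
  congr 1

lemma repr_basisVec (i : Fin (2 * m + 1)) (k : ℕ) :
    b.repr (basisVec b k) i = if k = (i : ℕ) + 1 then 1 else 0 := by
  by_cases h : 1 ≤ k ∧ k ≤ 2 * m + 1
  · rw [basisVec_in b k h.1 h.2, b.repr_self, Finsupp.single_apply]
    have : (⟨k - 1, by omega⟩ : Fin (2 * m + 1)) = i ↔ k = (i : ℕ) + 1 := by
      rw [Fin.ext_iff]; simp; omega
    by_cases hk : k = (i : ℕ) + 1
    · rw [if_pos (this.mpr hk), if_pos hk]
    · rw [if_neg (fun hh => hk (this.mp hh)), if_neg hk]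
  · rw [basisVec_out b k h, map_zero]
    have : ¬ k = (i : ℕ) + 1 := by have := i.isLt; omega
    simp [this]

variable (hm : 4 ≤ m) (hb : IsG4Basis m b)

include hb in
/-- Uniform bracket formula for all pairs of (1-indexed) basis vectors. -/
lemma lie_XX (a c : ℕ) :
    ⁅basisVec b a, basisVec b c⁆ =
      (if a = 1 ∧ 2 ≤ c ∧ c ≤ 2 * m - 1 then basisVec b (c + 1) else 0) +
      (if c = 1 ∧ 2 ≤ a ∧ a ≤ 2 * m - 1 then -basisVec b (a + 1) else 0) +
      (if 2 ≤ a ∧ 2 ≤ c ∧ a + c = 2 * m + 1 then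
        ((-1 : ℂ)) ^ a • basisVec b (2 * m + 1) else 0) := by
  rcases lt_trichotomy a c with h | h | h
  · rw [hb a c h, if_neg (show ¬(c = 1 ∧ 2 ≤ a ∧ a ≤ 2 * m - 1) by omega), add_zero]
    by_cases h3 : 2 ≤ a ∧ a + c = 2 * m + 1
    · rw [if_pos (show 2 ≤ a ∧ a ≤ m ∧ a + c = 2 * m + 1 from ⟨h3.1, by omega, h3.2⟩),
        if_pos (show 2 ≤ a ∧ 2 ≤ c ∧ a + c = 2 * m + 1 from ⟨h3.1, by omega, h3.2⟩)]
    · rw [if_neg (show ¬(2 ≤ a ∧ a ≤ m ∧ a + c = 2 * m + 1) by omega),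
        if_neg (show ¬(2 ≤ a ∧ 2 ≤ c ∧ a + c = 2 * m + 1) by omega)]
  · subst h
    rw [lie_self, if_neg (show ¬(a = 1 ∧ 2 ≤ a ∧ a ≤ 2 * m - 1) by omega),
      if_neg (show ¬(a = 1 ∧ 2 ≤ a ∧ a ≤ 2 * m - 1) by omega),
      if_neg (show ¬(2 ≤ a ∧ 2 ≤ a ∧ a + a = 2 * m + 1) by omega)]
    simp
  · rw [show ⁅basisVec b a, basisVec b c⁆ = -⁅basisVec b c, basisVec b a⁆ from
      (lie_skew _ _).symm, hb c a h,
      if_neg (show ¬(a = 1 ∧ 2 ≤ c ∧ c ≤ 2 * m - 1) by omega), zero_add, neg_add]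
    congr 1
    · by_cases hP : c = 1 ∧ 2 ≤ a ∧ a ≤ 2 * m - 1
      · rw [if_pos hP, if_pos hP]
      · rw [if_neg hP, if_neg hP, neg_zero]
    · by_cases hQ : 2 ≤ c ∧ a + c = 2 * m + 1
      · rw [if_pos (show 2 ≤ c ∧ c ≤ m ∧ c + a = 2 * m + 1 from ⟨hQ.1, by omega, by omega⟩),
          if_pos (show 2 ≤ a ∧ 2 ≤ c ∧ a + c = 2 * m + 1 from ⟨by omega, hQ.1, hQ.2⟩),
          ← neg_smul]
        congr 1
        have h1 : (-1 : ℂ) ^ c * (-1 : ℂ) ^ a = -1 := by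
          rw [← pow_add, show c + a = 2 * m + 1 by omega]
          exact Odd.neg_one_pow ⟨m, by ring⟩
        have h2 : (-1 : ℂ) ^ c * (-1 : ℂ) ^ c = 1 := by
          rw [← pow_add]
          exact Even.neg_one_pow ⟨c, rfl⟩
        have h3 : (-1 : ℂ) ^ a = ((-1 : ℂ) ^ c * (-1 : ℂ) ^ c) * (-1 : ℂ) ^ a := by
          rw [h2, one_mul]
        rw [h3, mul_assoc, h1]
        ring
      · rw [if_neg (show ¬(2 ≤ c ∧ c ≤ m ∧ c + a = 2 * m + 1) by omega),
          if_neg (show ¬(2 ≤ a ∧ 2 ≤ c ∧ a + c = 2 * m + 1) by omega), neg_zero]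

/-- Span of the (1-indexed) basis vectors with index `≥ j`. -/
def F (j : ℕ) : Submodule ℂ L := Submodule.span ℂ (basisVec b '' Set.Ici j)

lemma mem_F {i j : ℕ} (h : j ≤ i) : basisVec b i ∈ F b j :=
  Submodule.subset_span ⟨i, h, rfl⟩

lemma F_mono {j k : ℕ} (h : j ≤ k) : F b k ≤ F b j :=
  Submodule.span_mono (Set.image_mono (Set.Ici_subset_Ici.mpr h))

lemma F_one : F b 1 = ⊤ := by
  rw [eq_top_iff, ← b.span_eq]
  refine Submodule.span_le.mpr ?_
  rintro x ⟨i, rfl⟩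
  rw [SetLike.mem_coe, ← basisVec_fin b i]
  exact mem_F b (by omega)

lemma F_bot : F b (2 * m + 2) = ⊥ := by
  rw [eq_bot_iff]
  refine Submodule.span_le.mpr ?_
  rintro x ⟨i, hi, rfl⟩
  simp only [Set.mem_Ici] at hi
  rw [SetLike.mem_coe, basisVec_out b i (by omega)]
  exact Submodule.zero_mem _

lemma mem_F_of_repr {v : L} {j : ℕ}
    (h : ∀ i : Fin (2 * m + 1), (i : ℕ) + 1 < j → b.repr v i = 0) : v ∈ F b j := by
  rw [← b.sum_repr v]
  refine Submodule.sum_mem _ fun i _ => ?_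
  by_cases hij : (i : ℕ) + 1 < j
  · rw [h i hij, zero_smul]
    exact Submodule.zero_mem _
  · refine Submodule.smul_mem _ _ ?_
    rw [← basisVec_fin b i]
    exact mem_F b (by omega)

include hb in
lemma lie_X1_F {j : ℕ} (hj : 2 ≤ j) {v : L} (hv : v ∈ F b j) :
    ⁅basisVec b 1, v⁆ ∈ F b (j + 1) := by
  have key : F b j ≤ Submodule.comap
      (LieAlgebra.ad ℂ L (basisVec b 1) : Module.End ℂ L) (F b (j + 1)) := by
    refine Submodule.span_le.mpr ?_
    rintro x ⟨i, hi, rfl⟩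
    simp only [Set.mem_Ici] at hi
    simp only [SetLike.mem_coe, Submodule.mem_comap, LieAlgebra.ad_apply]
    rw [lie_XX b hb 1 i, if_neg (show ¬(i = 1 ∧ 2 ≤ 1 ∧ 1 ≤ 2 * m - 1) by omega),
      if_neg (show ¬(2 ≤ 1 ∧ 2 ≤ i ∧ 1 + i = 2 * m + 1) by omega)]
    by_cases h1 : 2 ≤ i ∧ i ≤ 2 * m - 1
    · rw [if_pos (show 1 = 1 ∧ 2 ≤ i ∧ i ≤ 2 * m - 1 from ⟨rfl, h1.1, h1.2⟩)]
      simpa using mem_F b (show j + 1 ≤ i + 1 by omega)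
    · rw [if_neg (show ¬(1 = 1 ∧ 2 ≤ i ∧ i ≤ 2 * m - 1) by omega)]
      simpa using Submodule.zero_mem _
  exact key hv

include hb in
lemma lie_F2_F2 {v w : L} (hv : v ∈ F b 2) (hw : w ∈ F b 2) :
    ⁅v, w⁆ ∈ F b (2 * m + 1) := by
  have inner : ∀ i : ℕ, 2 ≤ i → ∀ u ∈ F b 2, ⁅basisVec b i, u⁆ ∈ F b (2 * m + 1) := by
    intro i hi u hu
    have key : F b 2 ≤ Submodule.comap
        (LieAlgebra.ad ℂ L (basisVec b i) : Module.End ℂ L) (F b (2 * m + 1)) := by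
      refine Submodule.span_le.mpr ?_
      rintro x ⟨k, hk, rfl⟩
      simp only [Set.mem_Ici] at hk
      simp only [SetLike.mem_coe, Submodule.mem_comap, LieAlgebra.ad_apply]
      rw [lie_XX b hb i k, if_neg (by omega), if_neg (by omega)]
      by_cases h3 : i + k = 2 * m + 1
      · rw [if_pos ⟨hi, by omega, h3⟩]
        simpa using Submodule.smul_mem _ _ (mem_F b (le_refl _))
      · rw [if_neg (by omega)]
        simpa using Submodule.zero_mem _
    exact key hu
  have key2 : F b 2 ≤ Submodule.comap
      (-(LieAlgebra.ad ℂ L w) : Module.End ℂ L) (F b (2 * m + 1)) := by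
    refine Submodule.span_le.mpr ?_
    rintro x ⟨k, hk, rfl⟩
    simp only [Set.mem_Ici] at hk
    simp only [SetLike.mem_coe, Submodule.mem_comap, LinearMap.neg_apply, LieAlgebra.ad_apply]
    rw [lie_skew]
    exact inner k (by omega) w hw
  have hv' := key2 hv
  simp only [Submodule.mem_comap, LinearMap.neg_apply, LieAlgebra.ad_apply] at hv'
  rwa [lie_skew] at hv'

include hm hb in
lemma lie_F3_X2m1 {v : L} (hv : v ∈ F b 3) : ⁅v, basisVec b (2 * m - 1)⁆ = 0 := by
  have key : F b 3 ≤ Submodule.comap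
      (LieAlgebra.ad ℂ L (basisVec b (2 * m - 1)) : Module.End ℂ L) (⊥ : Submodule ℂ L) := by
    refine Submodule.span_le.mpr ?_
    rintro x ⟨k, hk, rfl⟩
    simp only [Set.mem_Ici] at hk
    simp only [SetLike.mem_coe, Submodule.mem_comap, LieAlgebra.ad_apply, Submodule.mem_bot]
    rw [lie_XX b hb (2 * m - 1) k, if_neg (by omega), if_neg (by omega), if_neg (by omega)]
    simp
  have h := key hv
  simp only [Submodule.mem_comap, LieAlgebra.ad_apply, Submodule.mem_bot] at h
  rw [← lie_skew, h, neg_zero]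

include hm hb in
lemma lie_X2_F2m {v : L} (hv : v ∈ F b (2 * m)) : ⁅basisVec b 2, v⁆ = 0 := by
  have key : F b (2 * m) ≤ Submodule.comap
      (LieAlgebra.ad ℂ L (basisVec b 2) : Module.End ℂ L) (⊥ : Submodule ℂ L) := by
    refine Submodule.span_le.mpr ?_
    rintro x ⟨k, hk, rfl⟩
    simp only [Set.mem_Ici] at hk
    simp only [SetLike.mem_coe, Submodule.mem_comap, LieAlgebra.ad_apply, Submodule.mem_bot]
    rw [lie_XX b hb 2 k, if_neg (by omega), if_neg (by omega), if_neg (by omega)]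
    simp
  have h := key hv
  simp only [Submodule.mem_comap, LieAlgebra.ad_apply, Submodule.mem_bot] at h
  exact h

include hm hb in
lemma lie_v_X2 (v : L) : ⁅v, basisVec b 2⁆ =
    b.repr v ⟨0, by omega⟩ • basisVec b 3 -
      b.repr v ⟨2 * m - 2, by omega⟩ • basisVec b (2 * m + 1) := by
  have key : (-(LieAlgebra.ad ℂ L (basisVec b 2)) : Module.End ℂ L)
      = (b.coord ⟨0, by omega⟩).smulRight (basisVec b 3)
        - (b.coord ⟨2 * m - 2, by omega⟩).smulRight (basisVec b (2 * m + 1)) := by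
    refine b.ext fun i => ?_
    simp only [LinearMap.neg_apply, LieAlgebra.ad_apply, LinearMap.sub_apply,
      LinearMap.smulRight_apply, Basis.coord_apply]
    rw [← basisVec_fin b i, lie_skew, lie_XX b hb ((i : ℕ) + 1) 2,
      repr_basisVec, repr_basisVec,
      if_neg (show ¬(2 = 1 ∧ 2 ≤ (i : ℕ) + 1 ∧ (i : ℕ) + 1 ≤ 2 * m - 1) by omega)]
    by_cases h0 : (i : ℕ) = 0
    · rw [if_pos (show (i : ℕ) + 1 = 1 ∧ 2 ≤ 2 ∧ 2 ≤ 2 * m - 1 from ⟨by omega, by omega, by omega⟩),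
        if_neg (show ¬(2 ≤ (i : ℕ) + 1 ∧ 2 ≤ 2 ∧ (i : ℕ) + 1 + 2 = 2 * m + 1) by omega),
        if_pos (show (i : ℕ) + 1 = (0 : ℕ) + 1 by omega),
        if_neg (show ¬((i : ℕ) + 1 = 2 * m - 2 + 1) by omega)]
      simp
    · rw [if_neg (show ¬((i : ℕ) + 1 = 1 ∧ 2 ≤ 2 ∧ 2 ≤ 2 * m - 1) by omega),
        if_neg (show ¬((i : ℕ) + 1 = (0 : ℕ) + 1) by omega)]
      by_cases h2 : (i : ℕ) = 2 * m - 2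
      · rw [if_pos (show 2 ≤ (i : ℕ) + 1 ∧ 2 ≤ 2 ∧ (i : ℕ) + 1 + 2 = 2 * m + 1 from
            ⟨by omega, le_refl _, by omega⟩),
          if_pos (show (i : ℕ) + 1 = 2 * m - 2 + 1 by omega),
          show ((-1 : ℂ)) ^ ((i : ℕ) + 1) = -1 from Odd.neg_one_pow ⟨m - 1, by omega⟩]
        simp
      · rw [if_neg (show ¬(2 ≤ (i : ℕ) + 1 ∧ 2 ≤ 2 ∧ (i : ℕ) + 1 + 2 = 2 * m + 1) by omega),
          if_neg (show ¬((i : ℕ) + 1 = 2 * m - 2 + 1) by omega)]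
        simp
  have h := LinearMap.congr_fun key v
  simp only [LinearMap.neg_apply, LieAlgebra.ad_apply, LinearMap.sub_apply,
    LinearMap.smulRight_apply, Basis.coord_apply] at h
  rw [← lie_skew, h]

include hm hb in
lemma lie_v_X3 (v : L) : ⁅v, basisVec b 3⁆ =
    b.repr v ⟨0, by omega⟩ • basisVec b 4 +
      b.repr v ⟨2 * m - 3, by omega⟩ • basisVec b (2 * m + 1) := by
  have key : (-(LieAlgebra.ad ℂ L (basisVec b 3)) : Module.End ℂ L)
      = (b.coord ⟨0, by omega⟩).smulRight (basisVec b 4)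
        + (b.coord ⟨2 * m - 3, by omega⟩).smulRight (basisVec b (2 * m + 1)) := by
    refine b.ext fun i => ?_
    simp only [LinearMap.neg_apply, LieAlgebra.ad_apply, LinearMap.add_apply,
      LinearMap.smulRight_apply, Basis.coord_apply]
    rw [← basisVec_fin b i, lie_skew, lie_XX b hb ((i : ℕ) + 1) 3,
      repr_basisVec, repr_basisVec,
      if_neg (show ¬(3 = 1 ∧ 2 ≤ (i : ℕ) + 1 ∧ (i : ℕ) + 1 ≤ 2 * m - 1) by omega)]
    by_cases h0 : (i : ℕ) = 0
    · rw [if_pos (show (i : ℕ) + 1 = 1 ∧ 2 ≤ 3 ∧ 3 ≤ 2 * m - 1 from ⟨by omega, by omega, by omega⟩),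
        if_neg (show ¬(2 ≤ (i : ℕ) + 1 ∧ 2 ≤ 3 ∧ (i : ℕ) + 1 + 3 = 2 * m + 1) by omega),
        if_pos (show (i : ℕ) + 1 = (0 : ℕ) + 1 by omega),
        if_neg (show ¬((i : ℕ) + 1 = 2 * m - 3 + 1) by omega)]
      simp
    · rw [if_neg (show ¬((i : ℕ) + 1 = 1 ∧ 2 ≤ 3 ∧ 3 ≤ 2 * m - 1) by omega),
        if_neg (show ¬((i : ℕ) + 1 = (0 : ℕ) + 1) by omega)]
      by_cases h2 : (i : ℕ) = 2 * m - 3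
      · rw [if_pos (show 2 ≤ (i : ℕ) + 1 ∧ 2 ≤ 3 ∧ (i : ℕ) + 1 + 3 = 2 * m + 1 from
            ⟨by omega, by omega, by omega⟩),
          if_pos (show (i : ℕ) + 1 = 2 * m - 3 + 1 by omega),
          show ((-1 : ℂ)) ^ ((i : ℕ) + 1) = 1 from Even.neg_one_pow ⟨m - 1, by omega⟩]
        simp
      · rw [if_neg (show ¬(2 ≤ (i : ℕ) + 1 ∧ 2 ≤ 3 ∧ (i : ℕ) + 1 + 3 = 2 * m + 1) by omega),
          if_neg (show ¬((i : ℕ) + 1 = 2 * m - 3 + 1) by omega)]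
        simp
  have h := LinearMap.congr_fun key v
  simp only [LinearMap.neg_apply, LieAlgebra.ad_apply, LinearMap.add_apply,
    LinearMap.smulRight_apply, Basis.coord_apply] at h
  rw [← lie_skew, h]

include hm hb in
lemma repr0_lie_X1 (v : L) : b.repr ⁅basisVec b 1, v⁆ ⟨0, by omega⟩ = 0 := by
  have key : (b.coord ⟨0, by omega⟩).comp (LieAlgebra.ad ℂ L (basisVec b 1) : Module.End ℂ L)
      = 0 := by
    refine b.ext fun i => ?_
    simp only [LinearMap.comp_apply, LieAlgebra.ad_apply, Basis.coord_apply, LinearMap.zero_apply]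
    rw [← basisVec_fin b i, lie_XX b hb 1 ((i : ℕ) + 1),
      if_neg (show ¬((i : ℕ) + 1 = 1 ∧ 2 ≤ 1 ∧ 1 ≤ 2 * m - 1) by omega),
      if_neg (show ¬(2 ≤ 1 ∧ 2 ≤ (i : ℕ) + 1 ∧ 1 + ((i : ℕ) + 1) = 2 * m + 1) by omega)]
    by_cases h1 : 2 ≤ (i : ℕ) + 1 ∧ (i : ℕ) + 1 ≤ 2 * m - 1
    · rw [if_pos (show 1 = 1 ∧ 2 ≤ (i : ℕ) + 1 ∧ (i : ℕ) + 1 ≤ 2 * m - 1 from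
        ⟨rfl, h1.1, h1.2⟩)]
      simp [repr_basisVec]
    · rw [if_neg (show ¬(1 = 1 ∧ 2 ≤ (i : ℕ) + 1 ∧ (i : ℕ) + 1 ≤ 2 * m - 1) by omega)]
      simp
  have h := LinearMap.congr_fun key v
  simpa only [LinearMap.comp_apply, LieAlgebra.ad_apply, Basis.coord_apply,
    LinearMap.zero_apply] using h

include hm hb in
lemma repr2m2_lie_X1 (v : L) :
    b.repr ⁅basisVec b 1, v⁆ ⟨2 * m - 2, by omega⟩ = b.repr v ⟨2 * m - 3, by omega⟩ := by
  have key : (b.coord ⟨2 * m - 2, by omega⟩).comp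
      (LieAlgebra.ad ℂ L (basisVec b 1) : Module.End ℂ L) = b.coord ⟨2 * m - 3, by omega⟩ := by
    refine b.ext fun i => ?_
    simp only [LinearMap.comp_apply, LieAlgebra.ad_apply, Basis.coord_apply]
    rw [← basisVec_fin b i, lie_XX b hb 1 ((i : ℕ) + 1),
      if_neg (show ¬((i : ℕ) + 1 = 1 ∧ 2 ≤ 1 ∧ 1 ≤ 2 * m - 1) by omega),
      if_neg (show ¬(2 ≤ 1 ∧ 2 ≤ (i : ℕ) + 1 ∧ 1 + ((i : ℕ) + 1) = 2 * m + 1) by omega)]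
    by_cases h1 : 2 ≤ (i : ℕ) + 1 ∧ (i : ℕ) + 1 ≤ 2 * m - 1
    · rw [if_pos (show 1 = 1 ∧ 2 ≤ (i : ℕ) + 1 ∧ (i : ℕ) + 1 ≤ 2 * m - 1 from
        ⟨rfl, h1.1, h1.2⟩)]
      simp only [add_zero, repr_basisVec]
      split_ifs <;> first | rfl | omega
    · rw [if_neg (show ¬(1 = 1 ∧ 2 ≤ (i : ℕ) + 1 ∧ (i : ℕ) + 1 ≤ 2 * m - 1) by omega)]
      simp only [add_zero, zero_add, map_zero, Finsupp.coe_zero, Pi.zero_apply, repr_basisVec]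
      split_ifs <;> first | rfl | omega
  have h := LinearMap.congr_fun key v
  simpa only [LinearMap.comp_apply, LieAlgebra.ad_apply, Basis.coord_apply] using h

include hm hb in
/-- The coefficient of `X₁` in `D X₂` vanishes for every derivation `D`. -/
lemma repr0_D_X2 (D : LieDerivation ℂ L L) :
    b.repr (D (basisVec b 2)) ⟨0, by omega⟩ = 0 := by
  have h23 : ⁅basisVec b 2, basisVec b 3⁆ = (0 : L) := by
    rw [lie_XX b hb 2 3, if_neg (show ¬((2 : ℕ) = 1 ∧ 2 ≤ 3 ∧ 3 ≤ 2 * m - 1) by omega),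
      if_neg (show ¬((3 : ℕ) = 1 ∧ 2 ≤ 2 ∧ 2 ≤ 2 * m - 1) by omega),
      if_neg (show ¬(2 ≤ 2 ∧ 2 ≤ 3 ∧ 2 + 3 = 2 * m + 1) by omega)]
    simp
  have hX3 : basisVec b 3 = ⁅basisVec b 1, basisVec b 2⁆ := by
    rw [lie_XX b hb 1 2,
      if_pos (show (1 : ℕ) = 1 ∧ 2 ≤ 2 ∧ 2 ≤ 2 * m - 1 from ⟨rfl, le_refl _, by omega⟩),
      if_neg (show ¬((2 : ℕ) = 1 ∧ 2 ≤ 1 ∧ 1 ≤ 2 * m - 1) by omega),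
      if_neg (show ¬(2 ≤ 1 ∧ 2 ≤ 2 ∧ 1 + 2 = 2 * m + 1) by omega)]
    simp
  have hDX3 : D (basisVec b 3) =
      ⁅basisVec b 1, D (basisVec b 2)⁆ + ⁅D (basisVec b 1), basisVec b 2⁆ := by
    rw [hX3, D.apply_lie_eq_add]
  have r0 : b.repr (D (basisVec b 3)) ⟨0, by omega⟩ = 0 := by
    rw [hDX3, map_add, Finsupp.add_apply, repr0_lie_X1 b hm hb, zero_add,
      lie_v_X2 b hm hb (D (basisVec b 1)), map_sub, Finsupp.sub_apply,
      map_smul, map_smul, Finsupp.smul_apply, Finsupp.smul_apply,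
      repr_basisVec, repr_basisVec,
      if_neg (show ¬((3 : ℕ) = 0 + 1) by omega),
      if_neg (show ¬(2 * m + 1 = 0 + 1) by omega)]
    simp
  have r2 : b.repr (D (basisVec b 3)) ⟨2 * m - 2, by omega⟩ =
      b.repr (D (basisVec b 2)) ⟨2 * m - 3, by omega⟩ := by
    rw [hDX3, map_add, Finsupp.add_apply, repr2m2_lie_X1 b hm hb,
      lie_v_X2 b hm hb (D (basisVec b 1)), map_sub, Finsupp.sub_apply,
      map_smul, map_smul, Finsupp.smul_apply, Finsupp.smul_apply,
      repr_basisVec, repr_basisVec,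
      if_neg (show ¬((3 : ℕ) = 2 * m - 2 + 1) by omega),
      if_neg (show ¬(2 * m + 1 = 2 * m - 2 + 1) by omega)]
    simp
  have hD : (0 : L) = ⁅basisVec b 2, D (basisVec b 3)⁆ + ⁅D (basisVec b 2), basisVec b 3⁆ := by
    have h := D.apply_lie_eq_add (basisVec b 2) (basisVec b 3)
    rwa [h23, map_zero] at h
  have e1 : ⁅basisVec b 2, D (basisVec b 3)⁆ =
      -(b.repr (D (basisVec b 3)) ⟨0, by omega⟩ • basisVec b 3 -
        b.repr (D (basisVec b 3)) ⟨2 * m - 2, by omega⟩ • basisVec b (2 * m + 1)) := by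
    rw [← lie_skew, lie_v_X2 b hm hb]
  rw [e1, lie_v_X3 b hm hb (D (basisVec b 2)), r0, r2] at hD
  have h4 := congrArg (fun u : L => b.repr u ⟨3, by omega⟩) hD
  simp only [map_zero, map_neg, map_add, map_sub, map_smul, Finsupp.zero_apply,
    Finsupp.neg_apply, Finsupp.add_apply, Finsupp.sub_apply, Finsupp.smul_apply,
    repr_basisVec] at h4
  rw [if_neg (show ¬((3 : ℕ) = 3 + 1) by omega),
    if_neg (show ¬(2 * m + 1 = 3 + 1) by omega)] at h4
  simpa using h4.symm

include hm hb in
lemma der_pow_eq_zero (D : LieDerivation ℂ L L)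
    (h1 : b.repr (D (basisVec b 1)) ⟨0, by omega⟩ = 0)
    (h2 : b.repr (D (basisVec b 2)) ⟨1, by omega⟩ = 0) :
    (D.toLinearMap) ^ (2 * m + 1) = 0 := by
  have hDD : ∀ x : L, D.toLinearMap x = D x := fun _ => rfl
  have hX1 : D (basisVec b 1) ∈ F b 2 := by
    refine mem_F_of_repr b fun i hi => ?_
    rw [show i = ⟨0, by omega⟩ from Fin.ext (show (i : ℕ) = 0 by omega)]
    exact h1
  have hX2 : D (basisVec b 2) ∈ F b 3 := by
    refine mem_F_of_repr b fun i hi => ?_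
    rcases (show (i : ℕ) = 0 ∨ (i : ℕ) = 1 by omega) with h | h
    · rw [show i = ⟨0, by omega⟩ from Fin.ext (show (i : ℕ) = 0 from h)]
      exact repr0_D_X2 b hm hb D
    · rw [show i = ⟨1, by omega⟩ from Fin.ext (show (i : ℕ) = 1 from h)]
      exact h2
  have main : ∀ j : ℕ, 1 ≤ j → j ≤ 2 * m → D (basisVec b j) ∈ F b (j + 1) := by
    intro j
    induction j using Nat.strong_induction_on with
    | _ j ih =>
      intro hj1 hj2
      by_cases e1 : j = 1
      · subst e1; exact hX1
      by_cases e2 : j = 2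
      · subst e2; exact hX2
      have h3 : 3 ≤ j := by omega
      have hXj : basisVec b j = ⁅basisVec b 1, basisVec b (j - 1)⁆ := by
        rw [lie_XX b hb 1 (j - 1),
          if_pos (show (1 : ℕ) = 1 ∧ 2 ≤ j - 1 ∧ j - 1 ≤ 2 * m - 1 from ⟨rfl, by omega, by omega⟩),
          if_neg (show ¬(j - 1 = 1 ∧ 2 ≤ 1 ∧ 1 ≤ 2 * m - 1) by omega),
          if_neg (show ¬(2 ≤ 1 ∧ 2 ≤ j - 1 ∧ 1 + (j - 1) = 2 * m + 1) by omega),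
          show j - 1 + 1 = j by omega]
        simp
      have hprev : D (basisVec b (j - 1)) ∈ F b j := by
        have h := ih (j - 1) (by omega) (by omega) (by omega)
        rwa [show j - 1 + 1 = j by omega] at h
      rw [hXj, D.apply_lie_eq_add]
      refine Submodule.add_mem _ ?_ ?_
      · exact lie_X1_F b hb (by omega) hprev
      · exact F_mono b (show j + 1 ≤ 2 * m + 1 by omega)
          (lie_F2_F2 b hb hX1 (mem_F b (by omega)))
  have htop : D (basisVec b (2 * m + 1)) = 0 := by
    have hX2m1 : basisVec b (2 * m + 1) = ⁅basisVec b 2, basisVec b (2 * m - 1)⁆ := by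
      rw [lie_XX b hb 2 (2 * m - 1),
        if_neg (show ¬((2 : ℕ) = 1 ∧ 2 ≤ 2 * m - 1 ∧ 2 * m - 1 ≤ 2 * m - 1) by omega),
        if_neg (show ¬(2 * m - 1 = 1 ∧ 2 ≤ 2 ∧ 2 ≤ 2 * m - 1) by omega),
        if_pos (show 2 ≤ 2 ∧ 2 ≤ 2 * m - 1 ∧ 2 + (2 * m - 1) = 2 * m + 1 from
          ⟨le_refl _, by omega, by omega⟩)]
      norm_num
    have hv : D (basisVec b (2 * m - 1)) ∈ F b (2 * m) := by
      have h := main (2 * m - 1) (by omega) (by omega)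
      rwa [show 2 * m - 1 + 1 = 2 * m by omega] at h
    rw [hX2m1, D.apply_lie_eq_add, lie_X2_F2m b hm hb hv, lie_F3_X2m1 b hm hb hX2, add_zero]
  have step : ∀ j : ℕ, ∀ v ∈ F b j, D v ∈ F b (j + 1) := by
    intro j
    have key : F b j ≤ Submodule.comap (D.toLinearMap) (F b (j + 1)) := by
      refine Submodule.span_le.mpr ?_
      rintro x ⟨i, hi, rfl⟩
      simp only [Set.mem_Ici] at hi
      simp only [SetLike.mem_coe, Submodule.mem_comap, hDD]
      by_cases hc0 : 1 ≤ i
      · by_cases hc : i ≤ 2 * m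
        · exact F_mono b (by omega) (main i hc0 hc)
        · by_cases hc1 : i = 2 * m + 1
          · rw [hc1, htop]
            exact Submodule.zero_mem _
          · rw [basisVec_out b i (by omega), map_zero]
            exact Submodule.zero_mem _
      · rw [show i = 0 by omega, basisVec_out b 0 (by omega), map_zero]
        exact Submodule.zero_mem _
    exact fun v hv => key hv
  have iter : ∀ n : ℕ, ∀ v : L, (D.toLinearMap ^ n) v ∈ F b (n + 1) := by
    intro n
    induction n with
    | zero =>
      intro v
      rw [pow_zero, Module.End.one_apply, F_one b]
      exact Submodule.mem_top
    | succ n ih =>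
      intro v
      rw [pow_succ', Module.End.mul_apply, hDD]
      exact step (n + 1) _ (ih v)
  refine LinearMap.ext fun v => ?_
  have h := iter (2 * m + 1) v
  have hbot : F b (2 * m + 1 + 1) = ⊥ := F_bot b
  rw [hbot, Submodule.mem_bot] at h
  rw [h, LinearMap.zero_apply]

section Diag

variable (w : Fin (2 * m + 1) → ℂ)

/-- The diagonal endomorphism with eigenvalue `w i` on `b i`. -/
noncomputable def diagMap : Module.End ℂ L := b.constr ℂ fun i => w i • b i

lemma diagMap_apply (i : Fin (2 * m + 1)) : diagMap b w (b i) = w i • b i :=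
  b.constr_basis ℂ _ i

/-- `w` reindexed by 1-based natural indices (0 out of range). -/
noncomputable def wext (j : ℕ) : ℂ :=
  if h : 1 ≤ j ∧ j ≤ 2 * m + 1 then w ⟨j - 1, by omega⟩ else 0

lemma diagMap_basisVec (j : ℕ) :
    diagMap b w (basisVec b j) = wext w j • basisVec b j := by
  by_cases h : 1 ≤ j ∧ j ≤ 2 * m + 1
  · rw [basisVec_in b j h.1 h.2, wext, dif_pos h, diagMap_apply]
  · rw [basisVec_out b j h, wext, dif_neg h, map_zero, smul_zero]

include hb in
lemma diagMap_leibniz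
    (hw1 : ∀ c : ℕ, 2 ≤ c → c ≤ 2 * m - 1 → wext w (c + 1) = wext w 1 + wext w c)
    (hw2 : ∀ a c : ℕ, 2 ≤ a → 2 ≤ c → a + c = 2 * m + 1 →
      wext w (2 * m + 1) = wext w a + wext w c) (x y : L) :
    diagMap b w ⁅x, y⁆ = ⁅diagMap b w x, y⁆ + ⁅x, diagMap b w y⁆ := by
  letI : LieRing (Module.End ℂ L) := LieRing.ofAssociativeRing
  have B : L →ₗ[ℂ] Module.End ℂ L := (LieAlgebra.ad ℂ L).toLinearMap
  have key : LinearMap.compr₂ (LieAlgebra.ad ℂ L).toLinearMap (diagMap b w) =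
      ((LieAlgebra.ad ℂ L).toLinearMap.comp (diagMap b w)) +
        (LinearMap.compl₂ (LieAlgebra.ad ℂ L).toLinearMap (diagMap b w)) := by
    refine b.ext fun i => ?_
    refine b.ext fun k => ?_
    simp only [LinearMap.compr₂_apply, LinearMap.comp_apply, LinearMap.add_apply,
      LinearMap.compl₂_apply, LieHom.coe_toLinearMap, LieAlgebra.ad_apply]
    rw [← basisVec_fin b i, ← basisVec_fin b k, diagMap_basisVec, diagMap_basisVec,
      smul_lie, lie_smul, lie_XX b hb ((i : ℕ) + 1) ((k : ℕ) + 1)]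
    simp only [map_add, apply_ite (diagMap b w), map_zero, map_neg, map_smul, diagMap_basisVec]
    by_cases p1 : (i : ℕ) + 1 = 1 ∧ 2 ≤ (k : ℕ) + 1 ∧ (k : ℕ) + 1 ≤ 2 * m - 1
    · simp only [if_pos p1,
        if_neg (show ¬((k : ℕ) + 1 = 1 ∧ 2 ≤ (i : ℕ) + 1 ∧ (i : ℕ) + 1 ≤ 2 * m - 1) by omega),
        if_neg (show ¬(2 ≤ (i : ℕ) + 1 ∧ 2 ≤ (k : ℕ) + 1 ∧
          (i : ℕ) + 1 + ((k : ℕ) + 1) = 2 * m + 1) by omega)]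
      rw [p1.1, hw1 ((k : ℕ) + 1) p1.2.1 p1.2.2]
      module
    · by_cases p2 : (k : ℕ) + 1 = 1 ∧ 2 ≤ (i : ℕ) + 1 ∧ (i : ℕ) + 1 ≤ 2 * m - 1
      · simp only [if_pos p2, if_neg p1,
          if_neg (show ¬(2 ≤ (i : ℕ) + 1 ∧ 2 ≤ (k : ℕ) + 1 ∧
            (i : ℕ) + 1 + ((k : ℕ) + 1) = 2 * m + 1) by omega)]
        rw [p2.1, hw1 ((i : ℕ) + 1) p2.2.1 p2.2.2]
        module
      · by_cases p3 : 2 ≤ (i : ℕ) + 1 ∧ 2 ≤ (k : ℕ) + 1 ∧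
            (i : ℕ) + 1 + ((k : ℕ) + 1) = 2 * m + 1
        · simp only [if_pos p3, if_neg p1, if_neg p2]
          rw [hw2 ((i : ℕ) + 1) ((k : ℕ) + 1) p3.1 p3.2.1 p3.2.2]
          module
        · simp only [if_neg p1, if_neg p2, if_neg p3]
          module
  have h := LinearMap.congr_fun (LinearMap.congr_fun key x) y
  simpa only [LinearMap.compr₂_apply, LinearMap.comp_apply, LinearMap.add_apply,
    LinearMap.compl₂_apply, LieHom.coe_toLinearMap, LieAlgebra.ad_apply] using h

/-- The diagonal derivation attached to an additive weight `w`. -/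
noncomputable def diagDer
    (hw1 : ∀ c : ℕ, 2 ≤ c → c ≤ 2 * m - 1 → wext w (c + 1) = wext w 1 + wext w c)
    (hw2 : ∀ a c : ℕ, 2 ≤ a → 2 ≤ c → a + c = 2 * m + 1 →
      wext w (2 * m + 1) = wext w a + wext w c) : LieDerivation ℂ L L :=
  { toLinearMap := diagMap b w
    leibniz' := fun x y => by
      have h := diagMap_leibniz b hb w hw1 hw2 x y
      rw [show (diagMap b w) ⁅x, y⁆ = ⁅diagMap b w x, y⁆ + ⁅x, diagMap b w y⁆ from h,
        ← lie_skew]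
      abel }

lemma diagMap_isSemisimple : Module.End.IsSemisimple (diagMap b w) := by
  classical
  refine Module.End.isSemisimple_of_squarefree_aeval_eq_zero
    (p := ∏ μ ∈ Finset.image w Finset.univ, (Polynomial.X - Polynomial.C μ)) ?_ ?_
  · exact Polynomial.Separable.squarefree
      ((Polynomial.separable_prod_X_sub_C_iff' (f := id)
        (s := Finset.image w Finset.univ)).mpr fun x _ y _ h => h)
  · refine b.ext fun i => ?_
    rw [LinearMap.zero_apply, ← Finset.prod_erase_mul _ _
      (Finset.mem_image_of_mem w (Finset.mem_univ i)), map_mul, Module.End.mul_apply]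
    have h0 : (Polynomial.aeval (diagMap b w)) (Polynomial.X - Polynomial.C (w i)) (b i) = 0 := by
      rw [map_sub, Polynomial.aeval_X, Polynomial.aeval_C, LinearMap.sub_apply,
        Module.algebraMap_end_apply, diagMap_apply, sub_self]
    rw [h0, map_zero]

lemma diagMap_comb (a c : ℂ) (w' : Fin (2 * m + 1) → ℂ) :
    a • diagMap b w + c • diagMap b w' = diagMap b (a • w + c • w') := by
  refine b.ext fun i => ?_
  simp [diagMap_apply, smul_smul, add_smul]

lemma diagMap_comm (w' : Fin (2 * m + 1) → ℂ) :
    (diagMap b w) ∘ₗ (diagMap b w') = (diagMap b w') ∘ₗ (diagMap b w) := by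
  refine b.ext fun i => ?_
  simp [diagMap_apply, smul_smul, mul_comm]

end Diag

/-- First weight function: `α = 1, β = 0`. -/
noncomputable def w1fun (m : ℕ) : Fin (2 * m + 1) → ℂ := fun i =>
  if (i : ℕ) = 0 then 1 else if (i : ℕ) = 2 * m then (2 * m : ℂ) - 3 else ((i : ℕ) : ℂ) - 1

/-- Second weight function: `α = 0, β = 1`. -/
noncomputable def w2fun (m : ℕ) : Fin (2 * m + 1) → ℂ := fun i =>
  if (i : ℕ) = 0 then 0 else if (i : ℕ) = 2 * m then 2 else 1

lemma wext_in (w : Fin (2 * m + 1) → ℂ) (j : ℕ) (h1 : 1 ≤ j) (h2 : j ≤ 2 * m + 1) :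
    wext w j = w ⟨j - 1, by omega⟩ := dif_pos ⟨h1, h2⟩

include hm in
lemma w1_hw1 : ∀ c : ℕ, 2 ≤ c → c ≤ 2 * m - 1 →
    wext (w1fun m) (c + 1) = wext (w1fun m) 1 + wext (w1fun m) c := by
  intro c h2 h3
  rw [wext_in (w1fun m) (c + 1) (by omega) (by omega),
    wext_in (w1fun m) 1 (by omega) (by omega), wext_in (w1fun m) c (by omega) (by omega)]
  simp only [w1fun]
  rw [if_neg (show ¬(c + 1 - 1 = 0) by omega), if_neg (show ¬(c + 1 - 1 = 2 * m) by omega),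
    if_pos trivial,
    if_neg (show ¬(c - 1 = 0) by omega), if_neg (show ¬(c - 1 = 2 * m) by omega)]
  have key : ((c + 1 - 1 : ℕ) : ℂ) - 1 = 1 + (((c - 1 : ℕ) : ℂ) - 1) := by
    rw [Nat.add_sub_cancel, Nat.cast_sub (show 1 ≤ c by omega)]
    push_cast
    ring
  exact key

include hm in
lemma w1_hw2 : ∀ a c : ℕ, 2 ≤ a → 2 ≤ c → a + c = 2 * m + 1 →
    wext (w1fun m) (2 * m + 1) = wext (w1fun m) a + wext (w1fun m) c := by
  intro a c ha hc hsum
  rw [wext_in (w1fun m) (2 * m + 1) (by omega) (by omega),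
    wext_in (w1fun m) a (by omega) (by omega), wext_in (w1fun m) c (by omega) (by omega)]
  simp only [w1fun]
  rw [if_neg (show ¬(2 * m + 1 - 1 = 0) by omega),
    if_pos (show 2 * m + 1 - 1 = 2 * m by omega),
    if_neg (show ¬(a - 1 = 0) by omega), if_neg (show ¬(a - 1 = 2 * m) by omega),
    if_neg (show ¬(c - 1 = 0) by omega), if_neg (show ¬(c - 1 = 2 * m) by omega)]
  have hcast : (a : ℂ) + (c : ℂ) = 2 * (m : ℂ) + 1 := by exact_mod_cast hsum
  have key : 2 * (m : ℂ) - 3 = (((a - 1 : ℕ) : ℂ) - 1) + (((c - 1 : ℕ) : ℂ) - 1) := by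
    rw [Nat.cast_sub (show 1 ≤ a by omega), Nat.cast_sub (show 1 ≤ c by omega)]
    push_cast
    linear_combination -hcast
  exact key

include hm in
lemma w2_hw1 : ∀ c : ℕ, 2 ≤ c → c ≤ 2 * m - 1 →
    wext (w2fun m) (c + 1) = wext (w2fun m) 1 + wext (w2fun m) c := by
  intro c h2 h3
  rw [wext_in (w2fun m) (c + 1) (by omega) (by omega),
    wext_in (w2fun m) 1 (by omega) (by omega), wext_in (w2fun m) c (by omega) (by omega)]
  simp only [w2fun]
  rw [if_neg (show ¬(c + 1 - 1 = 0) by omega), if_neg (show ¬(c + 1 - 1 = 2 * m) by omega),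
    if_pos trivial,
    if_neg (show ¬(c - 1 = 0) by omega), if_neg (show ¬(c - 1 = 2 * m) by omega)]
  norm_num

include hm in
lemma w2_hw2 : ∀ a c : ℕ, 2 ≤ a → 2 ≤ c → a + c = 2 * m + 1 →
    wext (w2fun m) (2 * m + 1) = wext (w2fun m) a + wext (w2fun m) c := by
  intro a c ha hc hsum
  rw [wext_in (w2fun m) (2 * m + 1) (by omega) (by omega),
    wext_in (w2fun m) a (by omega) (by omega), wext_in (w2fun m) c (by omega) (by omega)]
  simp only [w2fun]
  rw [if_neg (show ¬(2 * m + 1 - 1 = 0) by omega),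
    if_pos (show 2 * m + 1 - 1 = 2 * m by omega),
    if_neg (show ¬(a - 1 = 0) by omega), if_neg (show ¬(a - 1 = 2 * m) by omega),
    if_neg (show ¬(c - 1 = 0) by omega), if_neg (show ¬(c - 1 = 2 * m) by omega)]
  norm_num

end G4Aux

theorem stmt_10 (L : Type) [LieRing L] [LieAlgebra ℂ L] (m : ℕ) (hm : 4 ≤ m)
    (b : Basis (Fin (2 * m + 1)) ℂ L) (hb : IsG4Basis m b) :
    (∃ T : LieSubalgebra ℂ (LieDerivation ℂ L L),
      (∀ f ∈ T, ∀ g ∈ T, ⁅f, g⁆ = 0) ∧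
      (∀ f ∈ T, Module.End.IsSemisimple (LieDerivation.toLinearMap f)) ∧
      finrank ℂ T = 2) ∧
    (∀ T : LieSubalgebra ℂ (LieDerivation ℂ L L),
      (∀ f ∈ T, ∀ g ∈ T, ⁅f, g⁆ = 0) →
      (∀ f ∈ T, Module.End.IsSemisimple (LieDerivation.toLinearMap f)) →
      finrank ℂ T ≤ 2) := by
  classical
  haveI : FiniteDimensional ℂ L := Module.Finite.of_basis b
  constructor
  · -- existence of a 2-dimensional torus
    set D1 : LieDerivation ℂ L L :=
      G4Aux.diagDer b hb (G4Aux.w1fun m) (G4Aux.w1_hw1 hm) (G4Aux.w1_hw2 hm) with hD1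
    set D2 : LieDerivation ℂ L L :=
      G4Aux.diagDer b hb (G4Aux.w2fun m) (G4Aux.w2_hw1 hm) (G4Aux.w2_hw2 hm) with hD2
    have hcomm : ⁅D1, D2⁆ = 0 := by
      refine LieDerivation.ext fun x => ?_
      rw [LieDerivation.commutator_apply]
      have h := LinearMap.congr_fun
        (G4Aux.diagMap_comm b (G4Aux.w1fun m) (G4Aux.w2fun m)) x
      simp only [LinearMap.comp_apply] at h
      simp only [LieDerivation.coe_zero, Pi.zero_apply]
      exact sub_eq_zero.mpr h
    have hcomm' : ⁅D2, D1⁆ = 0 := by rw [← lie_skew, hcomm, neg_zero]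
    have habelian : ∀ f ∈ Submodule.span ℂ ({D1, D2} : Set (LieDerivation ℂ L L)),
        ∀ g ∈ Submodule.span ℂ ({D1, D2} : Set (LieDerivation ℂ L L)), ⁅f, g⁆ = 0 := by
      intro f hf g hg
      obtain ⟨af, cf, rfl⟩ := Submodule.mem_span_pair.mp hf
      obtain ⟨ag, cg, rfl⟩ := Submodule.mem_span_pair.mp hg
      simp [lie_add, add_lie, lie_smul, smul_lie, lie_self, hcomm, hcomm']
    refine ⟨{ toSubmodule := Submodule.span ℂ {D1, D2},
              lie_mem' := fun {x y} hx hy => by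
                have h := habelian x hx y hy
                rw [h]
                exact Submodule.zero_mem _ }, habelian, ?_, ?_⟩
    · -- semisimplicity
      intro f hf
      obtain ⟨a, c, rfl⟩ := Submodule.mem_span_pair.mp hf
      have heq : LieDerivation.toLinearMap (a • D1 + c • D2)
          = G4Aux.diagMap b (a • G4Aux.w1fun m + c • G4Aux.w2fun m) := by
        refine LinearMap.ext fun x => ?_
        have h := LinearMap.congr_fun
          (G4Aux.diagMap_comb b (G4Aux.w1fun m) a c (G4Aux.w2fun m)) x
        simp only [LinearMap.add_apply, LinearMap.smul_apply] at h
        exact h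
      rw [heq]
      exact G4Aux.diagMap_isSemisimple b _
    · -- dimension two
      have hli : LinearIndependent ℂ ![D1, D2] := by
        rw [LinearIndependent.pair_iff]
        intro s t hst
        have happ : ∀ v : L, s • D1 v + t • D2 v = 0 := fun v => by
          have h := LieDerivation.congr_fun hst v
          simpa [LieDerivation.add_apply, LieDerivation.smul_apply, LieDerivation.coe_zero]
            using h
        have e10 : D1 (b ⟨0, by omega⟩) = b ⟨0, by omega⟩ := by
          show G4Aux.diagMap b (G4Aux.w1fun m) (b ⟨0, by omega⟩) = _
          rw [G4Aux.diagMap_apply]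
          simp [G4Aux.w1fun]
        have e20 : D2 (b ⟨0, by omega⟩) = 0 := by
          show G4Aux.diagMap b (G4Aux.w2fun m) (b ⟨0, by omega⟩) = _
          rw [G4Aux.diagMap_apply]
          simp [G4Aux.w2fun]
        have h0 := happ (b ⟨0, by omega⟩)
        rw [e10, e20, smul_zero, add_zero] at h0
        have hs : s = 0 := (smul_eq_zero.mp h0).resolve_right (b.ne_zero _)
        have e11 : D1 (b ⟨1, by omega⟩) = 0 := by
          show G4Aux.diagMap b (G4Aux.w1fun m) (b ⟨1, by omega⟩) = _
          rw [G4Aux.diagMap_apply]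
          simp only [G4Aux.w1fun]
          rw [if_neg (show ¬((1 : ℕ) = 0) by omega), if_neg (show ¬((1 : ℕ) = 2 * m) by omega)]
          norm_num
        have e21 : D2 (b ⟨1, by omega⟩) = b ⟨1, by omega⟩ := by
          show G4Aux.diagMap b (G4Aux.w2fun m) (b ⟨1, by omega⟩) = _
          rw [G4Aux.diagMap_apply]
          simp only [G4Aux.w2fun]
          rw [if_neg (show ¬((1 : ℕ) = 0) by omega), if_neg (show ¬((1 : ℕ) = 2 * m) by omega)]
          norm_num
        have h1 := happ (b ⟨1, by omega⟩)
        rw [e11, e21, smul_zero, zero_add] at h1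
        have ht : t = 0 := (smul_eq_zero.mp h1).resolve_right (b.ne_zero _)
        exact ⟨hs, ht⟩
      have hspan := finrank_span_eq_card hli
      rw [Matrix.range_cons_cons_empty] at hspan
      simp at hspan
      exact hspan
  · -- upper bound
    intro T habel hss
    let Ψ : LieDerivation ℂ L L →ₗ[ℂ] ℂ × ℂ :=
      { toFun := fun D => (b.repr (D (basisVec b 1)) ⟨0, by omega⟩,
          b.repr (D (basisVec b 2)) ⟨1, by omega⟩)
        map_add' := fun D E => by
          simp only [LieDerivation.add_apply, map_add, Finsupp.add_apply, Prod.mk_add_mk]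
        map_smul' := fun r D => by
          simp only [LieDerivation.smul_apply, map_smul, Finsupp.smul_apply, RingHom.id_apply,
            Prod.smul_mk] }
    have hker : ∀ x : T.toSubmodule, (Ψ.comp T.toSubmodule.subtype) x = 0 → x = 0 := by
      intro x hx
      obtain ⟨D, hD⟩ := x
      simp only [LinearMap.comp_apply, Submodule.coe_subtype, LinearMap.coe_mk,
        AddHom.coe_mk, Ψ, Prod.mk_eq_zero] at hx
      have hnil : IsNilpotent (LieDerivation.toLinearMap D) :=
        ⟨2 * m + 1, G4Aux.der_pow_eq_zero b hm hb D hx.1 hx.2⟩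
      have hz := Module.End.eq_zero_of_isNilpotent_isSemisimple hnil (hss D hD)
      have hD0 : D = 0 := by
        refine LieDerivation.ext fun v => ?_
        have h := LinearMap.congr_fun hz v
        simpa [LieDerivation.coe_zero] using h
      exact Subtype.ext hD0
    have hinj : Function.Injective (Ψ.comp T.toSubmodule.subtype) := by
      rw [← LinearMap.ker_eq_bot, eq_bot_iff]
      intro x hx
      rw [Submodule.mem_bot]
      exact hker x (LinearMap.mem_ker.mp hx)
    have hle := LinearMap.finrank_le_finrank_of_injective hinj
    have h2 : finrank ℂ (ℂ × ℂ) = 2 := by simp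
    rw [h2] at hle
    exact hle
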